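/- There exists a universal constant C̄ > 0 such that for every a ∈ (0,1), every L ≥ 1, and every f ∈ C^1([0,L]): |f(0)|² ≤ C̄·( L^{1+a}·∫_0^L (f'(Y))²·Y^{-a} dY + L^{-(3-a)}·∫_0^L f(Y)²·(Y+Y²)·Y^{-a} dY ). -/

import Mathlib

open Set MeasureTheory Filter
open scoped Topology

lemma cs_integral {α : Type*} [MeasurableSpace α] {μ : Measure α} {u v : α → ℝ}
    (hu : Integrable (fun s => u s ^ 2) μ) (hv : Integrable (fun s => v s ^ 2) μ)
    (huv : Integrable (fun s => u s * v s) μ) :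
    (∫ s, u s * v s ∂μ) ^ 2 ≤ (∫ s, u s ^ 2 ∂μ) * (∫ s, v s ^ 2 ∂μ) := by
  set A := ∫ s, u s ^ 2 ∂μ with hA
  set B := ∫ s, u s * v s ∂μ with hB
  set C := ∫ s, v s ^ 2 ∂μ with hC
  have key : ∀ t : ℝ, 0 ≤ C * (t * t) + (-2 * B) * t + A := by
    intro t
    have h1 : (fun s => (u s - t * v s) ^ 2)
        = fun s => u s ^ 2 + ((-2 * t) * (u s * v s) + (t * t) * v s ^ 2) := by
      funext s; ring
    have h2 : 0 ≤ ∫ s, (u s - t * v s) ^ 2 ∂μ :=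
      integral_nonneg fun s => sq_nonneg _
    have hg2 : Integrable (fun s => (-2 * t) * (u s * v s) + (t * t) * v s ^ 2) μ := by
      exact (huv.const_mul _).add (hv.const_mul _)
    rw [h1, integral_add hu hg2,
      integral_add (huv.const_mul _) (hv.const_mul _), MeasureTheory.integral_const_mul,
      MeasureTheory.integral_const_mul] at h2
    linarith
  have := discrim_le_zero key
  rw [discrim] at this
  nlinarith [this]

theorem trace_inequality :
    ∃ Cbar : ℝ, 0 < Cbar ∧
      ∀ a ∈ Ioo (0:ℝ) 1, ∀ L : ℝ, 1 ≤ L → ∀ f : ℝ → ℝ,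
        ContDiffOn ℝ 1 f (Icc 0 L) →
        |f 0| ^ 2 ≤
          Cbar * (L ^ (1 + a) * (∫ Y in (0:ℝ)..L, (derivWithin f (Icc 0 L) Y) ^ 2 * Y ^ (-a))
            + L ^ (-(3 - a)) * ∫ Y in (0:ℝ)..L, (f Y) ^ 2 * (Y + Y ^ 2) * Y ^ (-a)) := by
  refine ⟨16, by norm_num, ?_⟩
  rintro a ⟨ha0, ha1⟩ L hL f hf
  have hL0 : (0:ℝ) < L := lt_of_lt_of_le one_pos hL
  have hL2 : (0:ℝ) < L / 2 := by linarith
  set g := derivWithin f (Icc 0 L) with hg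
  have hfc : ContinuousOn f (Icc 0 L) := hf.continuousOn
  have hgc : ContinuousOn g (Icc 0 L) :=
    hf.continuousOn_derivWithin (uniqueDiffOn_Icc hL0) le_rfl
  set I1 := ∫ Y in (0:ℝ)..L, g Y ^ 2 * Y ^ (-a) with hI1
  set I2 := ∫ Y in (0:ℝ)..L, (f Y) ^ 2 * (Y + Y ^ 2) * Y ^ (-a) with hI2
  -- integrability of the weighted integrands on [0, L]
  have hrpow : IntervalIntegrable (fun s : ℝ => s ^ (-a)) volume 0 L :=
    intervalIntegral.intervalIntegrable_rpow' (by linarith)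
  have huIcc : uIcc (0:ℝ) L = Icc 0 L := uIcc_of_le hL0.le
  have hw1 : IntervalIntegrable (fun s => g s ^ 2 * s ^ (-a)) volume 0 L := by
    apply IntervalIntegrable.continuousOn_mul hrpow
    rw [huIcc]; exact hgc.pow 2
  have hw2 : IntervalIntegrable (fun s => (f s) ^ 2 * (s + s ^ 2) * s ^ (-a)) volume 0 L := by
    apply IntervalIntegrable.continuousOn_mul hrpow
    rw [huIcc]
    exact (hfc.pow 2).mul (continuousOn_id.add (continuousOn_id.pow 2))
  have hI1nn : 0 ≤ I1 := by
    rw [hI1]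
    apply intervalIntegral.integral_nonneg hL0.le
    intro s hs
    exact mul_nonneg (sq_nonneg _) (Real.rpow_nonneg hs.1 _)
  have hI2nn : 0 ≤ I2 := by
    rw [hI2]
    apply intervalIntegral.integral_nonneg hL0.le
    intro s hs
    have : (0:ℝ) ≤ s + s ^ 2 := by nlinarith [hs.1]
    exact mul_nonneg (mul_nonneg (sq_nonneg _) this) (Real.rpow_nonneg hs.1 _)
  -- FTC
  have hFTC : ∀ Y ∈ Icc (L/2) L, (∫ s in (0:ℝ)..Y, g s) = f Y - f 0 := by
    intro Y hY
    have hY0 : 0 < Y := lt_of_lt_of_le hL2 hY.1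
    have hsub : Icc (0:ℝ) Y ⊆ Icc 0 L := Icc_subset_Icc le_rfl hY.2
    apply intervalIntegral.integral_eq_sub_of_hasDeriv_right_of_le hY0.le (hfc.mono hsub)
    · intro x hx
      have hx' : x ∈ Ioo 0 L := ⟨hx.1, lt_of_lt_of_le hx.2 hY.2⟩
      have hd : HasDerivWithinAt f (g x) (Icc 0 L) x :=
        ((hf.differentiableOn one_ne_zero) x ⟨hx'.1.le, hx'.2.le⟩).hasDerivWithinAt
      exact (hd.hasDerivAt (Icc_mem_nhds hx'.1 hx'.2)).hasDerivWithinAt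
    · exact (hgc.mono hsub).intervalIntegrable_of_Icc hY0.le
  -- Cauchy-Schwarz step
  have hCS : ∀ Y ∈ Icc (L/2) L, (∫ s in (0:ℝ)..Y, g s) ^ 2 ≤ I1 * L ^ (1 + a) := by
    intro Y hY
    have hY0 : 0 < Y := lt_of_lt_of_le hL2 hY.1
    set u : ℝ → ℝ := fun s => g s * s ^ (-(a/2)) with hu
    set v : ℝ → ℝ := fun s => s ^ (a/2) with hv
    set μY := volume.restrict (Ioc (0:ℝ) Y) with hμY
    have hEqu : EqOn (fun s => g s ^ 2 * s ^ (-a)) (fun s => u s ^ 2) (Ioc (0:ℝ) Y) := by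
      intro s hs
      have hs0 : 0 < s := hs.1
      simp only [hu, mul_pow]
      rw [sq (s ^ (-(a/2))), ← Real.rpow_add hs0, show -(a/2) + -(a/2) = -a by ring]
    have hEqv : EqOn (fun s : ℝ => s ^ a) (fun s => v s ^ 2) (Ioc (0:ℝ) Y) := by
      intro s hs
      simp only [hv]
      rw [sq (s ^ (a/2)), ← Real.rpow_add hs.1, show a/2 + a/2 = a by ring]
    have hEquv : EqOn g (fun s => u s * v s) (Ioc (0:ℝ) Y) := by
      intro s hs
      simp only [hu, hv]
      rw [mul_assoc, ← Real.rpow_add hs.1, show -(a/2) + a/2 = 0 by ring, Real.rpow_zero,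
        mul_one]
    have hsub : Ioc (0:ℝ) Y ⊆ Ioc 0 L := Ioc_subset_Ioc le_rfl hY.2
    have hIu : Integrable (fun s => u s ^ 2) μY :=
      ((hw1.1.mono_set hsub).congr_fun hEqu measurableSet_Ioc)
    have hIv : Integrable (fun s => v s ^ 2) μY := by
      have : IntervalIntegrable (fun s : ℝ => s ^ a) volume 0 L :=
        intervalIntegral.intervalIntegrable_rpow' (by linarith)
      exact (this.1.mono_set hsub).congr_fun hEqv measurableSet_Ioc
    have hIuv : Integrable (fun s => u s * v s) μY := by
      have : IntervalIntegrable g volume 0 L := hgc.intervalIntegrable_of_Icc hL0.le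
      exact (this.1.mono_set hsub).congr_fun hEquv measurableSet_Ioc
    have hcs := cs_integral hIu hIv hIuv
    have e1 : (∫ s, u s * v s ∂μY) = ∫ s in (0:ℝ)..Y, g s := by
      rw [intervalIntegral.integral_of_le hY0.le]
      exact (setIntegral_congr_fun measurableSet_Ioc hEquv).symm
    have e2 : (∫ s, u s ^ 2 ∂μY) = ∫ s in (0:ℝ)..Y, g s ^ 2 * s ^ (-a) := by
      rw [intervalIntegral.integral_of_le hY0.le]
      exact (setIntegral_congr_fun measurableSet_Ioc hEqu).symm
    have e3 : (∫ s, v s ^ 2 ∂μY) = ∫ s in (0:ℝ)..Y, s ^ a := by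
      rw [intervalIntegral.integral_of_le hY0.le]
      exact (setIntegral_congr_fun measurableSet_Ioc hEqv).symm
    rw [e1, e2, e3] at hcs
    have hle1 : (∫ s in (0:ℝ)..Y, g s ^ 2 * s ^ (-a)) ≤ I1 := by
      rw [hI1]
      apply intervalIntegral.integral_mono_interval le_rfl hY0.le hY.2 _ hw1
      filter_upwards [ae_restrict_mem measurableSet_Ioc] with s hs
      exact mul_nonneg (sq_nonneg _) (Real.rpow_nonneg hs.1.le _)
    have hle2 : (∫ s in (0:ℝ)..Y, s ^ a) ≤ L ^ (1 + a) := by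
      rw [integral_rpow (Or.inl (by linarith))]
      rw [Real.zero_rpow (by linarith)]
      have hYL : Y ^ (a + 1) ≤ L ^ (a + 1) :=
        Real.rpow_le_rpow hY0.le hY.2 (by linarith)
      have h1a : L ^ (a + 1) = L ^ (1 + a) := by rw [add_comm]
      have hp : (0:ℝ) ≤ Y ^ (a + 1) := Real.rpow_nonneg hY0.le _
      calc (Y ^ (a + 1) - 0) / (a + 1) = Y ^ (a + 1) / (a + 1) := by ring_nf
        _ ≤ Y ^ (a + 1) := by
            apply div_le_self hp; linarith
        _ ≤ L ^ (1 + a) := by rw [← h1a]; exact hYL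
    have hnn2 : 0 ≤ ∫ s in (0:ℝ)..Y, s ^ a := by
      apply intervalIntegral.integral_nonneg hY0.le
      intro s hs; exact Real.rpow_nonneg hs.1 _
    calc (∫ s in (0:ℝ)..Y, g s) ^ 2
        ≤ (∫ s in (0:ℝ)..Y, g s ^ 2 * s ^ (-a)) * ∫ s in (0:ℝ)..Y, s ^ a := hcs
      _ ≤ I1 * L ^ (1 + a) := by
          apply mul_le_mul hle1 hle2 hnn2 hI1nn
  -- pointwise bound B
  have hB : ∀ Y ∈ Icc (L/2) L, f 0 ^ 2 ≤ 2 * f Y ^ 2 + 2 * (I1 * L ^ (1 + a)) := by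
    intro Y hY
    have h1 := hCS Y hY
    rw [hFTC Y hY] at h1
    nlinarith [sq_nonneg (f Y + (f Y - f 0))]
  -- integrate B over [L/2, L]
  have hsub' : Icc (L/2) L ⊆ Icc 0 L := Icc_subset_Icc hL2.le le_rfl
  have hfsq : IntervalIntegrable (fun Y => 2 * f Y ^ 2) volume (L/2) L :=
    (continuousOn_const.mul ((hfc.mono hsub').pow 2)).intervalIntegrable_of_Icc (by linarith)
  have hC : (L - L/2) * f 0 ^ 2
      ≤ 2 * (∫ Y in (L/2)..L, f Y ^ 2) + (L - L/2) * (2 * (I1 * L ^ (1 + a))) := by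
    have hint : IntervalIntegrable (fun Y => 2 * f Y ^ 2 + 2 * (I1 * L ^ (1 + a)))
        volume (L/2) L := hfsq.add intervalIntegrable_const
    have hmono := intervalIntegral.integral_mono_on (by linarith : L/2 ≤ L)
      intervalIntegrable_const hint (hB ·)
    rw [intervalIntegral.integral_const, intervalIntegral.integral_add hfsq
      intervalIntegrable_const, intervalIntegral.integral_const_mul,
      intervalIntegral.integral_const] at hmono
    simpa [smul_eq_mul] using hmono
  -- pointwise bound D
  have hptD : ∀ Y ∈ Icc (L/2) L,
      f Y ^ 2 ≤ 4 * L ^ (a - 2) * ((f Y) ^ 2 * (Y + Y ^ 2) * Y ^ (-a)) := by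
    intro Y hY
    have hY0 : 0 < Y := lt_of_lt_of_le hL2 hY.1
    have hkey : 1 ≤ 4 * L ^ (a - 2) * ((Y + Y ^ 2) * Y ^ (-a)) := by
      have h2 : Y ^ 2 * Y ^ (-a) = Y ^ (2 - a) := by
        rw [show (2 - a) = (2:ℕ) + (-a) by push_cast; ring, Real.rpow_add hY0,
          Real.rpow_natCast]
      have h3 : (L/2) ^ (2 - a) ≤ Y ^ (2 - a) :=
        Real.rpow_le_rpow hL2.le hY.1 (by linarith)
      have h4 : (L/2) ^ (2 - a) = L ^ (2 - a) / 2 ^ (2 - a) :=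
        Real.div_rpow hL0.le (by norm_num : (0:ℝ) ≤ 2) (2 - a)
      have h5 : (2:ℝ) ^ (2 - a) ≤ 4 := by
        calc (2:ℝ) ^ (2 - a) ≤ 2 ^ (2:ℝ) :=
              Real.rpow_le_rpow_of_exponent_le one_le_two (by linarith)
          _ = 4 := by
              rw [show ((2:ℝ):ℝ) = ((2:ℕ):ℝ) by norm_num, Real.rpow_natCast]; norm_num
      have h6 : L ^ (2 - a) / 4 ≤ (L/2) ^ (2 - a) := by
        rw [h4]
        apply div_le_div_of_nonneg_left (Real.rpow_nonneg hL0.le _) (Real.rpow_pos_of_pos two_pos _) h5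
      have h7 : L ^ (a - 2) * L ^ (2 - a) = 1 := by
        rw [← Real.rpow_add hL0]; norm_num
      have hYa : 0 ≤ Y * Y ^ (-a) := mul_nonneg hY0.le (Real.rpow_nonneg hY0.le _)
      have hLp : 0 < L ^ (a - 2) := Real.rpow_pos_of_pos hL0 _
      have hexp : Y ^ (2 - a) ≥ L ^ (2 - a) / 4 := le_trans h6 h3
      have hW : (Y + Y ^ 2) * Y ^ (-a) ≥ L ^ (2 - a) / 4 := by
        have : (Y + Y ^ 2) * Y ^ (-a) = Y * Y ^ (-a) + Y ^ 2 * Y ^ (-a) := by ring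
        rw [this, h2]; linarith
      nlinarith [mul_le_mul_of_nonneg_left hW (le_of_lt hLp)]
    have hfy : (0:ℝ) ≤ f Y ^ 2 := sq_nonneg _
    calc f Y ^ 2 = f Y ^ 2 * 1 := by ring
      _ ≤ f Y ^ 2 * (4 * L ^ (a - 2) * ((Y + Y ^ 2) * Y ^ (-a))) :=
          mul_le_mul_of_nonneg_left hkey hfy
      _ = 4 * L ^ (a - 2) * ((f Y) ^ 2 * (Y + Y ^ 2) * Y ^ (-a)) := by ring
  -- integral bound D
  have hw2' : IntervalIntegrable (fun s => (f s) ^ 2 * (s + s ^ 2) * s ^ (-a))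
      volume (L/2) L := by
    apply hw2.mono_set
    rw [huIcc, uIcc_of_le (by linarith : L/2 ≤ L)]
    exact hsub'
  have hD : (∫ Y in (L/2)..L, f Y ^ 2) ≤ 4 * L ^ (a - 2) * I2 := by
    have step1 : (∫ Y in (L/2)..L, f Y ^ 2)
        ≤ ∫ Y in (L/2)..L, 4 * L ^ (a - 2) * ((f Y) ^ 2 * (Y + Y ^ 2) * Y ^ (-a)) := by
      apply intervalIntegral.integral_mono_on (by linarith : L/2 ≤ L)
        (((hfc.mono hsub').pow 2).intervalIntegrable_of_Icc (by linarith))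
        (hw2'.const_mul _) hptD
    have step2 : (∫ Y in (L/2)..L, 4 * L ^ (a - 2) * ((f Y) ^ 2 * (Y + Y ^ 2) * Y ^ (-a)))
        = 4 * L ^ (a - 2) * ∫ Y in (L/2)..L, (f Y) ^ 2 * (Y + Y ^ 2) * Y ^ (-a) :=
      intervalIntegral.integral_const_mul _ _
    have step3 : (∫ Y in (L/2)..L, (f Y) ^ 2 * (Y + Y ^ 2) * Y ^ (-a)) ≤ I2 := by
      rw [hI2]
      apply intervalIntegral.integral_mono_interval hL2.le (by linarith : L/2 ≤ L) le_rfl _ hw2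
      filter_upwards [ae_restrict_mem measurableSet_Ioc] with s hs
      have h1 : (0:ℝ) ≤ s + s ^ 2 := by nlinarith [hs.1.le]
      exact mul_nonneg (mul_nonneg (sq_nonneg _) h1) (Real.rpow_nonneg hs.1.le _)
    have hLp : (0:ℝ) ≤ 4 * L ^ (a - 2) := by positivity
    calc (∫ Y in (L/2)..L, f Y ^ 2)
        ≤ 4 * L ^ (a - 2) * ∫ Y in (L/2)..L, (f Y) ^ 2 * (Y + Y ^ 2) * Y ^ (-a) := by
          rw [← step2]; exact step1
      _ ≤ 4 * L ^ (a - 2) * I2 := mul_le_mul_of_nonneg_left step3 hLp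
  -- final assembly
  rw [sq_abs]
  have e1 : L * L ^ (-(3 - a)) = L ^ (a - 2) := by
    rw [show L * L ^ (-(3 - a)) = L ^ (1:ℝ) * L ^ (-(3-a)) by rw [Real.rpow_one],
      ← Real.rpow_add hL0, show (1:ℝ) + -(3 - a) = a - 2 by ring]
  have hPnn : 0 ≤ L ^ (1 + a) * I1 := mul_nonneg (Real.rpow_nonneg hL0.le _) hI1nn
  have hgoal : L/2 * (f 0 ^ 2) ≤ L/2 * (16 * (L ^ (1 + a) * I1 + L ^ (-(3 - a)) * I2)) := by
    have h8 : 2 * (∫ Y in (L/2)..L, f Y ^ 2) ≤ 8 * (L * (L ^ (-(3 - a)) * I2)) := by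
      have := hD
      rw [← e1] at this
      nlinarith [this]
    have h9 : 0 ≤ L * (L ^ (1 + a) * I1) := mul_nonneg hL0.le hPnn
    nlinarith [hC, h8, h9]
  exact le_of_mul_le_mul_left (by linarith [hgoal]) hL2
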